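/- If ε_1,...,ε_n are i.i.d. uniform ±1 random variables, then E[|∑_{i=1}^n ε_i|] ≥ sqrt(n/2). -/

import Mathlib

open MeasureTheory
open Finset


lemma key16 : ∀ m : ℕ, 1 ≤ m → 16 ^ m ≤ 4 * m * (Nat.centralBinom m) ^ 2 := by
  intro m hm
  induction m with
  | zero => omega
  | succ m ih =>
    rcases Nat.eq_or_lt_of_le hm with h | h
    · rw [← h]; decide
    · have hm1 : 1 ≤ m := by omega
      have IH := ih hm1
      have hrec := Nat.succ_mul_centralBinom_succ m
      set B := Nat.centralBinom m with hB
      set B1 := Nat.centralBinom (m+1) with hB1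
      have hsq : ((m+1) * B1)^2 = (2*(2*m+1))^2 * B^2 := by rw [hrec]; ring
      refine Nat.le_of_mul_le_mul_left ?_ (show 0 < (m+1)^2 by positivity)
      calc (m+1)^2 * 16^(m+1) = 16*(m+1)^2 * 16^m := by ring
        _ ≤ 16*(m+1)^2 * (4*m*B^2) := Nat.mul_le_mul_left _ IH
        _ = 4*m*(m+1) * (16*(m+1)*B^2) := by ring
        _ ≤ (2*m+1)^2 * (16*(m+1)*B^2) := by
            apply Nat.mul_le_mul_right; nlinarith
        _ = 4*(m+1) * ((2*(2*m+1))^2 * B^2) := by ring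
        _ = 4*(m+1) * ((m+1)*B1)^2 := by rw [hsq]
        _ = (m+1)^2 * (4*(m+1)*B1^2) := by ring

lemma term_id (n k : ℕ) (hk1 : 1 ≤ k) (hk2 : k ≤ n) :
    (n.choose k : ℝ) * ((n : ℝ) - 2 * k)
      = (n : ℝ) * ((n-1).choose k) - (n : ℝ) * ((n-1).choose (k-1)) := by
  have hn1 : 1 ≤ n := le_trans hk1 hk2
  have hk' : k - 1 + 1 = k := by omega
  have hn' : n - 1 + 1 = n := by omega
  have hA : n * (n-1).choose (k-1) = n.choose k * k := by
    have := Nat.add_one_mul_choose_eq (n-1) (k-1)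
    simpa [Nat.succ_eq_add_one, hk', hn'] using this
  have hB : (n-1).choose k * n = n.choose k * (n - k) := by
    have := Nat.choose_mul_succ_eq (n-1) k
    rwa [hn'] at this
  have hA' : (n : ℝ) * ((n-1).choose (k-1)) = (n.choose k : ℝ) * k := by
    exact_mod_cast congrArg (Nat.cast (R := ℝ)) hA
  have hB' : ((n-1).choose k : ℝ) * n = (n.choose k : ℝ) * ((n:ℝ) - k) := by
    have h2 := congrArg (Nat.cast (R := ℝ)) hB
    push_cast [Nat.cast_sub hk2] at h2
    exact h2
  rw [hA']
  nlinarith [hB']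

lemma tele (n : ℕ) (hn : 1 ≤ n) : ∀ j, j ≤ n - 1 →
    ∑ k ∈ range (j+1), (n.choose k : ℝ) * ((n : ℝ) - 2 * k)
      = (n : ℝ) * ((n-1).choose j) := by
  intro j
  induction j with
  | zero => simp
  | succ j ih =>
    intro hj
    rw [sum_range_succ, ih (by omega), term_id n (j+1) (by omega) (by omega),
      (by omega : j + 1 - 1 = j)]
    ring

lemma total0 (n : ℕ) (hn : 1 ≤ n) :
    ∑ k ∈ range (n+1), (n.choose k : ℝ) * ((n : ℝ) - 2 * k) = 0 := by
  rw [sum_range_succ]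
  have h := tele n hn (n-1) le_rfl
  rw [(by omega : (n-1)+1 = n)] at h
  rw [h, Nat.choose_self, Nat.choose_self]
  push_cast
  ring

lemma abs_lower (n : ℕ) (hn : 1 ≤ n) (j : ℕ) (hj : j ≤ n - 1) :
    2 * (n : ℝ) * ((n-1).choose j) ≤
      ∑ k ∈ range (n+1), (n.choose k : ℝ) * |2 * (k : ℝ) - n| := by
  have habs : ∀ k, (n.choose k : ℝ) * |2 * (k : ℝ) - n| = |(n.choose k : ℝ) * ((n:ℝ) - 2*k)| := by
    intro k
    rw [abs_mul, abs_of_nonneg (by positivity : (0:ℝ) ≤ (n.choose k : ℝ)), ← abs_neg ((n:ℝ) - 2*k)]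
    ring_nf
  simp only [habs]
  have hsplit : ∑ k ∈ range (n+1), |(n.choose k : ℝ) * ((n:ℝ) - 2*k)|
      = ∑ k ∈ range (j+1), |(n.choose k : ℝ) * ((n:ℝ) - 2*k)|
        + ∑ k ∈ Ico (j+1) (n+1), |(n.choose k : ℝ) * ((n:ℝ) - 2*k)| := by
    simp only [range_eq_Ico]
    exact (Finset.sum_Ico_consecutive _ (Nat.zero_le _) (by omega)).symm
  have h1 : (n : ℝ) * ((n-1).choose j) ≤ ∑ k ∈ range (j+1), |(n.choose k : ℝ) * ((n:ℝ) - 2*k)| := by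
    rw [← tele n hn j hj]
    exact Finset.sum_le_sum fun k _ => le_abs_self _
  have h2 : (n : ℝ) * ((n-1).choose j) ≤ ∑ k ∈ Ico (j+1) (n+1), |(n.choose k : ℝ) * ((n:ℝ) - 2*k)| := by
    have hz := total0 n hn
    rw [range_eq_Ico, ← Finset.sum_Ico_consecutive _ (Nat.zero_le (j+1)) (by omega : j+1 ≤ n+1)] at hz
    have ht := tele n hn j hj
    rw [range_eq_Ico] at ht
    have hneg : ∑ k ∈ Ico (j+1) (n+1), (n.choose k : ℝ) * ((n:ℝ) - 2*k) = -((n:ℝ) * ((n-1).choose j)) := by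
      rw [ht] at hz; linarith
    calc (n : ℝ) * ((n-1).choose j)
        = -∑ k ∈ Ico (j+1) (n+1), (n.choose k : ℝ) * ((n:ℝ) - 2*k) := by rw [hneg]; ring
      _ ≤ ∑ k ∈ Ico (j+1) (n+1), |(n.choose k : ℝ) * ((n:ℝ) - 2*k)| := by
          rw [← Finset.sum_neg_distrib]
          exact Finset.sum_le_sum fun k _ => neg_le_abs _
  rw [hsplit]; linarith

private def boolEquivFinset (n : ℕ) : (Fin n → Bool) ≃ Finset (Fin n) where
  toFun ε := Finset.univ.filter (fun i => ε i)
  invFun s := fun i => decide (i ∈ s)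
  left_inv := by intro ε; funext i; simp
  right_inv := by intro s; ext i; simp

lemma integral_eq (n : ℕ) :
    ∫ ε, |∑ i, (if ε i then (1 : ℝ) else -1)|
        ∂(Measure.pi fun _ : Fin n => (PMF.uniformOfFintype Bool).toMeasure)
      = (2:ℝ)⁻¹ ^ n * ∑ k ∈ range (n+1), (n.choose k : ℝ) * |2 * (k:ℝ) - n| := by
  set μ := Measure.pi fun _ : Fin n => (PMF.uniformOfFintype Bool).toMeasure with hμ
  have hsingle : ∀ ε : Fin n → Bool, μ {ε} = 2⁻¹ ^ n := by
    intro ε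
    rw [hμ, ← Set.univ_pi_singleton, Measure.pi_pi]
    have : ∀ i : Fin n, (PMF.uniformOfFintype Bool).toMeasure {ε i} = 2⁻¹ := by
      intro i
      rw [PMF.toMeasure_apply_singleton _ _ (measurableSet_singleton _),
        PMF.uniformOfFintype_apply]
      simp
    simp [this]
  rw [integral_fintype .of_finite]
  simp only [measureReal_def]
  have hstep : ∀ ε : Fin n → Bool,
      (μ {ε}).toReal • |∑ i, (if ε i then (1 : ℝ) else -1)|
        = (2:ℝ)⁻¹ ^ n * |∑ i, (if ε i then (1 : ℝ) else -1)| := by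
    intro ε
    rw [hsingle ε]
    simp [smul_eq_mul, ENNReal.toReal_pow]
  simp only [hstep]
  rw [← Finset.mul_sum]
  congr 1
  -- now: ∑ over ε of |...| = ∑ k choose * |2k - n|
  set e := boolEquivFinset n with he
  rw [← Equiv.sum_comp e.symm (fun ε => |∑ i, (if ε i then (1 : ℝ) else -1)|)]
  have hval : ∀ s : Finset (Fin n),
      |∑ i, (if (e.symm s) i then (1 : ℝ) else -1)| = |2 * (#s : ℝ) - n| := by
    intro s
    congr 1
    have : ∀ i : Fin n, (if (e.symm s) i then (1 : ℝ) else -1)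
        = 2 * (if i ∈ s then (1:ℝ) else 0) - 1 := by
      intro i
      show (if decide (i ∈ s) = true then (1 : ℝ) else -1)
          = 2 * (if i ∈ s then (1:ℝ) else 0) - 1
      by_cases h : i ∈ s <;> norm_num [h]
    simp only [this]
    rw [Finset.sum_sub_distrib, ← Finset.mul_sum, Finset.sum_boole]
    simp [Finset.filter_mem_eq_inter]
  simp only [hval]
  rw [← Finset.powerset_univ]
  rw [Finset.sum_powerset_apply_card (fun k => |2*(k:ℝ) - n|)]
  simp [Finset.card_univ, nsmul_eq_mul]

lemma centralBinom_eq_two_mul (m : ℕ) (hm : 1 ≤ m) :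
    Nat.centralBinom m = 2 * ((2*m-1).choose (m-1)) := by
  have h := Nat.add_one_mul_choose_eq (2*m-1) (m-1)
  have h1 : 2*m-1+1 = 2*m := by omega
  have h2 : m-1+1 = m := by omega
  simp only [Nat.succ_eq_add_one, h1, h2] at h
  -- h : 2*m * C(2m−1,m−1) = C(2m,m) * m
  apply Nat.eq_of_mul_eq_mul_left (show 0 < m by omega)
  calc m * Nat.centralBinom m = (2*m).choose m * m := by
        rw [Nat.centralBinom]; ring
    _ = 2*m * ((2*m-1).choose (m-1)) := h.symm
    _ = m * (2 * ((2*m-1).choose (m-1))) := by ring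

lemma sqrt_le_of_sq (a L : ℝ) (hL : 0 ≤ L) (h : a ≤ L^2) : Real.sqrt a ≤ L := by
  calc Real.sqrt a ≤ Real.sqrt (L^2) := Real.sqrt_le_sqrt h
    _ = L := Real.sqrt_sq hL

/-- Szarek-type lower bound: for `n` i.i.d. uniform `±1` signs,
`E[|∑_{i=1}^n ε_i|] ≥ sqrt(n/2)`. -/
theorem stmt13 (n : ℕ) :
    Real.sqrt ((n : ℝ) / 2) ≤
      ∫ ε, |∑ i, (if ε i then (1 : ℝ) else -1)|
        ∂(Measure.pi fun _ : Fin n => (PMF.uniformOfFintype Bool).toMeasure) := by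
  rw [integral_eq n]
  rcases Nat.eq_zero_or_pos n with h0 | hn
  · subst h0; simp
  set j := (n-1)/2 with hj
  have hjle : j ≤ n - 1 := Nat.div_le_self _ _
  have hmain := abs_lower n hn j hjle
  have hI : (2:ℝ)⁻¹^n * (2*(n:ℝ)*((n-1).choose j)) ≤
      (2:ℝ)⁻¹^n * ∑ k ∈ range (n+1), (n.choose k : ℝ) * |2 * (k:ℝ) - n| :=
    mul_le_mul_of_nonneg_left hmain (by positivity)
  refine le_trans ?_ hI
  apply sqrt_le_of_sq _ _ (by positivity)
  rcases Nat.even_or_odd n with ⟨m, hm⟩ | ⟨m, hm⟩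
  · -- n = m + m, m ≥ 1
    have hm1 : 1 ≤ m := by omega
    have hjm : j = m - 1 := by omega
    have hn1 : n - 1 = 2*m - 1 := by omega
    set B : ℝ := (Nat.centralBinom m : ℝ) with hB
    set C : ℝ := (((2*m-1).choose (m-1) : ℕ) : ℝ) with hC
    have hBC : B = 2*C := by
      rw [hB, hC, centralBinom_eq_two_mul m hm1]; push_cast; ring
    have hkey : (16:ℝ)^m ≤ 4*m*B^2 := by
      rw [hB]; exact_mod_cast key16 m hm1
    have hn' : (n:ℝ) = 2*m := by rw [hm]; push_cast; ring
    have hu : (0:ℝ) ≤ ((2⁻¹:ℝ)^n)^2 := by positivity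
    have hpow2 : ((2:ℝ)⁻¹^n)^2 * (16:ℝ)^m = 1 := by
      rw [hm, ← pow_mul, show (m+m)*2 = 4*m by ring, pow_mul, ← mul_pow]
      norm_num
    rw [hjm, hn1]
    calc (n:ℝ)/2 = (m:ℝ) * (((2:ℝ)⁻¹^n)^2 * (16:ℝ)^m) := by rw [hpow2, hn']; ring
      _ ≤ (m:ℝ) * (((2:ℝ)⁻¹^n)^2 * (4*m*B^2)) :=
          mul_le_mul_of_nonneg_left (mul_le_mul_of_nonneg_left hkey hu) (by positivity)
      _ = ((2:ℝ)⁻¹^n * (2*(n:ℝ)*C))^2 := by rw [hn', hBC]; ring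
  · -- n = 2m + 1
    rcases Nat.eq_zero_or_pos m with hm0 | hm1
    · subst hm0
      have : n = 1 := by omega
      subst this
      norm_num [hj]
    have hjm : j = m := by omega
    have hn1 : n - 1 = 2*m := by omega
    set B : ℝ := (Nat.centralBinom m : ℝ) with hB
    have hkey : (16:ℝ)^m ≤ 4*m*B^2 := by
      rw [hB]; exact_mod_cast key16 m hm1
    have hkey2 : (16:ℝ)^m ≤ 2*(2*m+1)*B^2 := by nlinarith [sq_nonneg B]
    have hn' : (n:ℝ) = 2*m+1 := by rw [hm]; push_cast; ring
    have hu : (0:ℝ) ≤ ((2⁻¹:ℝ)^n)^2 := by positivity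
    have hpow2 : ((2:ℝ)⁻¹^n)^2 * (16:ℝ)^m = 4⁻¹ := by
      rw [hm, ← pow_mul, show (2*m+1)*2 = 4*m+2 by ring, pow_add, pow_mul]
      calc ((2:ℝ)⁻¹^4)^m * 2⁻¹^2 * 16^m = (((2:ℝ)⁻¹^4) * 16)^m * 2⁻¹^2 := by
            rw [mul_pow]; ring
        _ = 4⁻¹ := by norm_num
    have hCB : ((n-1).choose j : ℝ) = B := by
      rw [hjm, hn1, hB, Nat.centralBinom]
    rw [hCB]
    calc (n:ℝ)/2 = (2*(2*(m:ℝ)+1)) * (((2:ℝ)⁻¹^n)^2 * (16:ℝ)^m) := by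
          rw [hpow2, hn']; ring
      _ ≤ (2*(2*(m:ℝ)+1)) * (((2:ℝ)⁻¹^n)^2 * (2*(2*m+1)*B^2)) :=
          mul_le_mul_of_nonneg_left (mul_le_mul_of_nonneg_left hkey2 hu) (by positivity)
      _ = ((2:ℝ)⁻¹^n * (2*(n:ℝ)*B))^2 := by rw [hn']; ring
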